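/- Let p ≥ 1, q ≥ 1, and n ≥ 1 be integers, and let m be an integer with m ≤ -(2n-1)q. Let Γ = ⟨a, b, t ∣ t a^p t⁻¹ = b⁻¹ a^p, t b^{-q} a⁻¹ t⁻¹ = b^{-q}, t^m [b^q, a^p]^n = 1⟩, with commutator convention [x,y] = x⁻¹y⁻¹xy and integer powers interpreted as zpow. Then the identity element 1 of Γ lies in ⟨⟨t⟩⟩⁺; consequently, if t ≠ 1 in Γ, then t is a generalized torsion element of Γ. -/

import Mathlib

/-- `g` is a generalized torsion element of `G`: `g ≠ 1` and some non-empty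
finite product of conjugates of `g` equals `1`. -/
def IsGeneralizedTorsion {G : Type*} [Group G] (g : G) : Prop :=
  g ≠ 1 ∧ ∃ xs : List G, xs ≠ [] ∧ (xs.map (fun x => x * g * x⁻¹)).prod = 1

/-- `⟨⟨g⟩⟩⁺`: the set of all non-empty finite products of conjugates of `g`. -/
def conjProdSet {G : Type*} [Group G] (g : G) : Set G :=
  {a | ∃ xs : List G, xs ≠ [] ∧ (xs.map (fun x => x * g * x⁻¹)).prod = a}

/-- The commutator, with the convention `[x,y] = x⁻¹y⁻¹xy`. -/
def com {G : Type*} [Group G] (x y : G) : G := x⁻¹ * y⁻¹ * x * y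

/-- Relators of the presentation
`⟨a, b, t ∣ t a^p t⁻¹ = b⁻¹ a^p, t b^{-q} a⁻¹ t⁻¹ = b^{-q}, t^m [b^q,a^p]^n = 1⟩`
of `π₁(K(m/n))` for `m/n`-surgery on the genus one two-bridge knot
`K = C[2p, 2q]`; generator `0` is `a`, generator `1` is `b`, generator `2` is
`t` (the meridian), and `[b^q, a^p]` is the longitude. -/
def surgeryRels (p q m n : ℤ) : Set (FreeGroup (Fin 3)) :=
  { FreeGroup.of 2 * FreeGroup.of 0 ^ p * (FreeGroup.of 2)⁻¹ *
      ((FreeGroup.of 1)⁻¹ * FreeGroup.of 0 ^ p)⁻¹,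
    FreeGroup.of 2 * FreeGroup.of 1 ^ (-q) * (FreeGroup.of 0)⁻¹ *
      (FreeGroup.of 2)⁻¹ * (FreeGroup.of 1 ^ (-q))⁻¹,
    FreeGroup.of 2 ^ m *
      ((FreeGroup.of 1 ^ q)⁻¹ * (FreeGroup.of 0 ^ p)⁻¹ *
        FreeGroup.of 1 ^ q * FreeGroup.of 0 ^ p) ^ n }

section ConjProdLemmas

variable {G : Type*} [Group G] {g x y : G}

theorem conjProdSet_conj_mem (g x : G) : x * g * x⁻¹ ∈ conjProdSet g :=
  ⟨[x], by simp, by simp⟩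

theorem conjProdSet_mul_mem (hx : x ∈ conjProdSet g) (hy : y ∈ conjProdSet g) :
    x * y ∈ conjProdSet g := by
  obtain ⟨xs, hxs, hxp⟩ := hx
  obtain ⟨ys, hys, hyp⟩ := hy
  exact ⟨xs ++ ys, by simp [hxs], by simp [hxp, hyp]⟩

theorem conjProd_map_mul (g u : G) : ∀ xs : List G,
    ((xs.map (fun v => u * v)).map (fun x => x * g * x⁻¹)).prod
      = u * ((xs.map (fun x => x * g * x⁻¹)).prod) * u⁻¹
  | [] => by simp
  | x :: xs => by
    simp only [List.map_cons, List.prod_cons, conjProd_map_mul g u xs]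
    group

theorem conjProdSet_conj_mem' (hx : x ∈ conjProdSet g) (u : G) :
    u * x * u⁻¹ ∈ conjProdSet g := by
  obtain ⟨xs, h1, h2⟩ := hx
  exact ⟨xs.map (fun v => u * v), by simpa using h1,
    by rw [conjProd_map_mul, h2]⟩

theorem conjProdSet_pow_mem (hx : x ∈ conjProdSet g) : ∀ k : ℕ, x ^ (k + 1) ∈ conjProdSet g
  | 0 => by simpa using hx
  | k + 1 => by
    rw [pow_succ]
    exact conjProdSet_mul_mem (conjProdSet_pow_mem hx k) hx

theorem conjProdSet_pow_mem_or (hx : x ∈ conjProdSet g) (k : ℕ) :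
    x ^ k ∈ conjProdSet g ∨ x ^ k = 1 := by
  cases k with
  | zero => right; simp
  | succ k => left; exact conjProdSet_pow_mem hx k

theorem conjProdSet_mul_mem_or (hx : x ∈ conjProdSet g ∨ x = 1)
    (hy : y ∈ conjProdSet g ∨ y = 1) :
    x * y ∈ conjProdSet g ∨ x * y = 1 := by
  rcases hx with hx | hx <;> rcases hy with hy | hy
  · exact Or.inl (conjProdSet_mul_mem hx hy)
  · subst hy; rw [mul_one]; exact Or.inl hx
  · subst hx; rw [one_mul]; exact Or.inl hy
  · subst hx; subst hy; right; simp

theorem conjProdSet_mul_right_or (hx : x ∈ conjProdSet g)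
    (hy : y ∈ conjProdSet g ∨ y = 1) : x * y ∈ conjProdSet g := by
  rcases hy with hy | hy
  · exact conjProdSet_mul_mem hx hy
  · subst hy; rw [mul_one]; exact hx

end ConjProdLemmas

/-- Theorem 1.5(2): for `p ≥ 1`, `q ≥ 1`, `n ≥ 1` and `m ≤ -(2n-1)q`, in
`Γ = π₁(K(m/n))` for `K = C[2p, 2q]` the identity lies in `⟨⟨t⟩⟩⁺`;
consequently, if `t ≠ 1` then the meridian `t` is a generalized torsion
element of `Γ`. -/
theorem genus_one_two_bridge_surgery_negative_slope (p q m n : ℤ)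
    (hp : 1 ≤ p) (hq : 1 ≤ q) (hn : 1 ≤ n) (hm : m ≤ -((2 * n - 1) * q)) :
    letI t : PresentedGroup (surgeryRels p q m n) := PresentedGroup.of 2
    (1 : PresentedGroup (surgeryRels p q m n)) ∈ conjProdSet t ∧
    (t ≠ 1 → IsGeneralizedTorsion t) := by
  show (1 : PresentedGroup (surgeryRels p q m n)) ∈ conjProdSet (PresentedGroup.of 2) ∧
    ((PresentedGroup.of 2 : PresentedGroup (surgeryRels p q m n)) ≠ 1 →
      IsGeneralizedTorsion (PresentedGroup.of 2))
  set a : PresentedGroup (surgeryRels p q m n) := PresentedGroup.of 0 with ha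
  set b : PresentedGroup (surgeryRels p q m n) := PresentedGroup.of 1 with hb
  set t : PresentedGroup (surgeryRels p q m n) := PresentedGroup.of 2 with ht
  -- the projection from the free group
  have hrel : ∀ r ∈ surgeryRels p q m n,
      PresentedGroup.mk (surgeryRels p q m n) r = 1 := fun r hr =>
    (QuotientGroup.eq_one_iff r).mpr (Subgroup.subset_normalClosure hr)
  have h1 : t * a ^ p * t⁻¹ * (b⁻¹ * a ^ p)⁻¹ = 1 := by
    have h := hrel _ (Set.mem_insert _ _)
    simp only [map_mul, map_zpow, map_inv] at h
    exact h
  have h2 : t * b ^ (-q) * a⁻¹ * t⁻¹ * (b ^ (-q))⁻¹ = 1 := by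
    have h := hrel _ (Set.mem_insert_of_mem _ (Set.mem_insert _ _))
    simp only [map_mul, map_zpow, map_inv] at h
    exact h
  have h3 : t ^ m * ((b ^ q)⁻¹ * (a ^ p)⁻¹ * b ^ q * a ^ p) ^ n = 1 := by
    have h := hrel _ (Set.mem_insert_of_mem _ (Set.mem_insert_of_mem _ rfl))
    simp only [map_mul, map_zpow, map_inv] at h
    exact h
  clear hrel
  -- natural number exponents
  obtain ⟨Q, hQcast⟩ : ∃ Q : ℕ, (Q : ℤ) = q := ⟨q.toNat, Int.toNat_of_nonneg (by linarith)⟩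
  obtain ⟨Q', rfl⟩ : ∃ Q', Q = Q' + 1 := ⟨Q - 1, by omega⟩
  obtain ⟨N', hNcast⟩ : ∃ N' : ℕ, (N' : ℤ) + 1 = n := ⟨(n - 1).toNat, by omega⟩
  have h2n1q : (1 : ℤ) ≤ (2 * n - 1) * q := by
    have h1' : (1 : ℤ) ≤ 2 * n - 1 := by omega
    nlinarith
  obtain ⟨K, hKcast⟩ : ∃ K : ℕ, (K : ℤ) = -m :=
    ⟨(-m).toNat, Int.toNat_of_nonneg (by linarith)⟩
  -- rewrite relations with natural exponents and an opaque A
  obtain ⟨A, hA⟩ : ∃ A, A = a ^ p := ⟨_, rfl⟩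
  have hcaA : Commute a A := hA ▸ Commute.zpow_right (Commute.refl a) p
  have hbQ : b ^ q = b ^ (Q' + 1) := by
    have h := congrArg (fun z : ℤ => b ^ z) hQcast.symm
    simpa only [zpow_natCast] using h
  rw [← hA] at h1 h3
  rw [zpow_neg, hbQ] at h2
  rw [hbQ] at h3
  set lam := (b ^ (Q' + 1))⁻¹ * A⁻¹ * b ^ (Q' + 1) * A with hlam
  have htm : t ^ m = (t ^ K)⁻¹ := by
    have h := congrArg (fun z : ℤ => t ^ z) (show m = -((K : ℤ)) by omega)
    simpa only [zpow_neg, zpow_natCast] using h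
  have hln : lam ^ n = lam ^ (N' + 1) := by
    have h := congrArg (fun z : ℤ => lam ^ z) (show n = (((N' + 1 : ℕ)) : ℤ) by push_cast; omega)
    simpa only [zpow_natCast] using h
  rw [htm, hln] at h3
  have hlamK : t ^ K = lam ^ (N' + 1) := inv_mul_eq_one.mp h3
  -- the two semiconjugation relations
  have s1 : A * t = b * t * A := by
    have h := mul_inv_eq_one.mp h1
    calc A * t = b * (t * A * t⁻¹) * t := by rw [h]; group
      _ = b * t * A := by group
  have s2 : b ^ (Q' + 1) * t = t * a * b ^ (Q' + 1) := by
    have h := mul_inv_eq_one.mp h2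
    calc b ^ (Q' + 1) * t = (t * (b ^ (Q' + 1))⁻¹ * a⁻¹ * t⁻¹)⁻¹ * t := by rw [h]; group
      _ = t * a * b ^ (Q' + 1) := by group
  have sA : SemiconjBy A t (b * t) := s1
  have sB : SemiconjBy (b ^ (Q' + 1)) t (t * a) := s2
  have saA : SemiconjBy A a a := hcaA.symm
  have sbB : SemiconjBy (b ^ (Q' + 1)) b b := (Commute.refl b).pow_left (Q' + 1)
  have step1 : SemiconjBy (A * b ^ (Q' + 1)) t (b * t * a) :=
    SemiconjBy.mul_left (sA.mul_right saA) sB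
  have step2 : SemiconjBy ((b ^ (Q' + 1))⁻¹) (b * t * a) (b * t) := by
    have h := SemiconjBy.mul_right (sbB.inv_symm_left) (sB.inv_symm_left)
    rwa [← mul_assoc] at h
  have chi : SemiconjBy ((b ^ (Q' + 1))⁻¹ * (A * b ^ (Q' + 1))) t (b * t) :=
    step2.mul_left step1
  have chiQ := chi.pow_right (Q' + 1)
  -- lam commutes with t
  have hltt : lam⁻¹ * t = t * lam⁻¹ := by
    calc lam⁻¹ * t
        = A⁻¹ * (((b ^ (Q' + 1))⁻¹ * (A * b ^ (Q' + 1))) * t) := by rw [hlam]; group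
      _ = A⁻¹ * ((b * t) * ((b ^ (Q' + 1))⁻¹ * (A * b ^ (Q' + 1)))) := by rw [chi.eq]
      _ = (A⁻¹ * (b * t)) * ((b ^ (Q' + 1))⁻¹ * (A * b ^ (Q' + 1))) := by group
      _ = (t * A⁻¹) * ((b ^ (Q' + 1))⁻¹ * (A * b ^ (Q' + 1))) := by rw [(sA.inv_symm_left).eq]
      _ = t * lam⁻¹ := by rw [hlam]; group
  have hcomm : Commute lam t := Commute.inv_left_iff.mp hltt
  -- the key identity (Lemma 1)
  have hY : lam⁻¹ * t ^ (Q' + 1)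
      = (A⁻¹ * ((b * t) ^ (Q' + 1) * (b ^ (Q' + 1))⁻¹) * A) * b ^ (Q' + 1) := by
    calc lam⁻¹ * t ^ (Q' + 1)
        = A⁻¹ * (((b ^ (Q' + 1))⁻¹ * (A * b ^ (Q' + 1))) * t ^ (Q' + 1)) := by
          rw [hlam]; group
      _ = A⁻¹ * ((b * t) ^ (Q' + 1) * ((b ^ (Q' + 1))⁻¹ * (A * b ^ (Q' + 1)))) := by
          rw [chiQ.eq]
      _ = (A⁻¹ * ((b * t) ^ (Q' + 1) * (b ^ (Q' + 1))⁻¹) * A) * b ^ (Q' + 1) := by group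
  -- memberships
  have htS : t ∈ conjProdSet t := by simpa using conjProdSet_conj_mem t 1
  have hbt : b * t = A * t * A⁻¹ := by rw [sA.eq]; group
  have hbtS : b * t ∈ conjProdSet t := by rw [hbt]; exact conjProdSet_conj_mem t A
  have hX : ∀ k : ℕ, (b * t) ^ (k + 1) * (b ^ (k + 1))⁻¹ ∈ conjProdSet t := by
    intro k; induction k with
    | zero => simpa using conjProdSet_conj_mem t b
    | succ k ih =>
      have hstep : (b * t) ^ (k + 1 + 1) * (b ^ (k + 1 + 1))⁻¹
          = ((b * t) ^ (k + 1) * (b ^ (k + 1))⁻¹) *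
            (b ^ (k + 1 + 1) * t * (b ^ (k + 1 + 1))⁻¹) := by
        rw [pow_succ (b * t) (k + 1), pow_succ b (k + 1)]
        group
      rw [hstep]
      exact conjProdSet_mul_mem ih (conjProdSet_conj_mem t _)
  have hZ : ∀ k : ℕ, b ^ (k + 1) * t ^ (k + 1) ∈ conjProdSet t := by
    intro k; induction k with
    | zero => simpa using hbtS
    | succ k ih =>
      have hstep : b ^ (k + 1 + 1) * t ^ (k + 1 + 1)
          = (b * (b ^ (k + 1) * t ^ (k + 1)) * b⁻¹) * (b * t) := by
        rw [pow_succ' b (k + 1), pow_succ t (k + 1)]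
        group
      rw [hstep]
      exact conjProdSet_mul_mem (conjProdSet_conj_mem' ih b) hbtS
  set Y₁ := A⁻¹ * ((b * t) ^ (Q' + 1) * (b ^ (Q' + 1))⁻¹) * A with hY₁def
  have hY₁S : Y₁ ∈ conjProdSet t := by
    rw [hY₁def]
    have h := conjProdSet_conj_mem' (hX Q') A⁻¹
    simpa [inv_inv] using h
  set Z := b ^ (Q' + 1) * t ^ (Q' + 1) with hZdef
  have hZS : Z ∈ conjProdSet t := hZ Q'
  set U := Y₁ * Z with hUdef
  have hUS : U ∈ conjProdSet t := conjProdSet_mul_mem hY₁S hZS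
  -- arithmetic for the exponent
  have hKR : (N' * 2 + 1) * (Q' + 1) ≤ K := by
    have hcast : (((N' * 2 + 1) * (Q' + 1) : ℕ) : ℤ) = (2 * n - 1) * q := by
      push_cast
      rw [← hQcast, ← hNcast]
      push_cast
      ring
    have hle : (((N' * 2 + 1) * (Q' + 1) : ℕ) : ℤ) ≤ (K : ℤ) := by
      rw [hcast, hKcast]; linarith
    exact_mod_cast hle
  obtain ⟨E, hKE⟩ : ∃ E : ℕ, K = (N' * 2 + 1) * (Q' + 1) + E :=
    ⟨K - (N' * 2 + 1) * (Q' + 1), by omega⟩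
  set W := U ^ N' * t ^ E with hWdef
  -- value computations
  have hUval : U = lam⁻¹ * t ^ (2 * (Q' + 1)) := by
    have h2Q : Q' + 1 + (Q' + 1) = 2 * (Q' + 1) := by ring
    calc U = (Y₁ * b ^ (Q' + 1)) * t ^ (Q' + 1) := by rw [hUdef, hZdef]; group
      _ = (lam⁻¹ * t ^ (Q' + 1)) * t ^ (Q' + 1) := by rw [← hY]
      _ = lam⁻¹ * t ^ (2 * (Q' + 1)) := by rw [mul_assoc, ← pow_add, h2Q]
  have hWval : t ^ (Q' + 1) * W = lam := by
    have hc1 : Commute (lam⁻¹) (t ^ (2 * (Q' + 1))) := (hcomm.inv_left).pow_right _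
    have hUpow : U ^ N' = (lam⁻¹) ^ N' * (t ^ (2 * (Q' + 1))) ^ N' := by
      rw [hUval]; exact hc1.mul_pow N'
    have hc2 : t ^ (Q' + 1) * (lam⁻¹) ^ N' = (lam⁻¹) ^ N' * t ^ (Q' + 1) :=
      ((hcomm.symm.inv_right).pow_pow _ _).eq
    have harith : (Q' + 1) + (2 * (Q' + 1) * N' + E) = K := by rw [hKE]; ring
    calc t ^ (Q' + 1) * W
        = (t ^ (Q' + 1) * (lam⁻¹) ^ N') * ((t ^ (2 * (Q' + 1))) ^ N' * t ^ E) := by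
          rw [hWdef, hUpow]; group
      _ = ((lam⁻¹) ^ N' * t ^ (Q' + 1)) * ((t ^ (2 * (Q' + 1))) ^ N' * t ^ E) := by
          rw [hc2]
      _ = (lam⁻¹) ^ N' * t ^ ((Q' + 1) + (2 * (Q' + 1) * N' + E)) := by
          rw [← pow_mul, ← pow_add, mul_assoc, ← pow_add]
      _ = (lam⁻¹) ^ N' * t ^ K := by rw [harith]
      _ = (lam⁻¹) ^ N' * lam ^ (N' + 1) := by rw [hlamK]
      _ = lam := by rw [pow_succ, inv_pow, inv_mul_cancel_left]
  have hV : Y₁ * (A * Z * A⁻¹) * (A * W * A⁻¹) * W = 1 := by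
    calc Y₁ * (A * Z * A⁻¹) * (A * W * A⁻¹) * W
        = Y₁ * (A * (b ^ (Q' + 1) * (t ^ (Q' + 1) * W)) * A⁻¹) * W := by
          rw [hZdef]; group
      _ = Y₁ * (A * (b ^ (Q' + 1) * lam) * A⁻¹) * W := by rw [hWval]
      _ = (Y₁ * b ^ (Q' + 1)) * W := by rw [hlam]; group
      _ = (lam⁻¹ * t ^ (Q' + 1)) * W := by rw [← hY]
      _ = lam⁻¹ * (t ^ (Q' + 1) * W) := by group
      _ = lam⁻¹ * lam := by rw [hWval]
      _ = 1 := inv_mul_cancel lam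
  -- membership of the whole product
  have hWor : W ∈ conjProdSet t ∨ W = 1 := by
    rw [hWdef]
    exact conjProdSet_mul_mem_or (conjProdSet_pow_mem_or hUS N') (conjProdSet_pow_mem_or htS E)
  have hAWor : A * W * A⁻¹ ∈ conjProdSet t ∨ A * W * A⁻¹ = 1 := by
    rcases hWor with h | h
    · exact Or.inl (conjProdSet_conj_mem' h A)
    · right; rw [h]; simp
  have hmain : (1 : PresentedGroup (surgeryRels p q m n)) ∈ conjProdSet t := by
    rw [← hV]
    exact conjProdSet_mul_right_or
      (conjProdSet_mul_right_or
        (conjProdSet_mul_mem hY₁S (conjProdSet_conj_mem' hZS A)) hAWor) hWor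
  exact ⟨hmain, fun hne => ⟨hne, hmain⟩⟩
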